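/- Let E be an edge relation on V and let E' be obtained from E by reversing a directed cycle c₀, …, c_{k−1} (k ≥ 1, pairwise distinct vertices). Then E and E' have the same SCC equivalence relation: for all u, v, u ∼_E v if and only if u ∼_{E'} v. -/

import Mathlib

/-- Vertices `u` and `v` are in the same strongly connected component of `E`. -/
def SCCEq {V : Type*} (E : V → V → Prop) (u v : V) : Prop :=
  Relation.ReflTransGen E u v ∧ Relation.ReflTransGen E v u

/-- `c 0, …, c (k-1)` is a directed cycle in `E`: `k ≥ 1`, the vertices are
pairwise distinct, and `E (c i) (c ((i+1) mod k))` for every `i < k`. -/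
def IsDirectedCycle {V : Type*} (E : V → V → Prop) (k : ℕ) (c : ℕ → V) : Prop :=
  1 ≤ k ∧ (∀ i < k, ∀ j < k, c i = c j → i = j) ∧ ∀ i < k, E (c i) (c ((i + 1) % k))

/-- The edge relation obtained from `E` by reversing the cycle `c 0, …, c (k-1)`:
each cycle edge is removed and its reverse added; all other edges are unchanged. -/
def ReverseCycle {V : Type*} (E : V → V → Prop) (k : ℕ) (c : ℕ → V) (u v : V) : Prop :=
  (E u v ∧ ¬ ∃ i < k, u = c i ∧ v = c ((i + 1) % k)) ∨
    ∃ i < k, u = c ((i + 1) % k) ∧ v = c i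

private lemma rtg_of_pointwise {V : Type*} {F G : V → V → Prop}
    (h : ∀ u v, F u v → Relation.ReflTransGen G u v) {u v : V}
    (huv : Relation.ReflTransGen F u v) : Relation.ReflTransGen G u v := by
  have := Relation.ReflTransGen.mono (r := F) (p := Relation.ReflTransGen G)
    (fun a b hab => h a b hab) u v huv
  rwa [Relation.reflTransGen_idem] at this

private lemma cycle_fwd {V : Type*} {F : V → V → Prop} {k : ℕ} {c : ℕ → V}
    (hk : 1 ≤ k) (h : ∀ i < k, Relation.ReflTransGen F (c i) (c ((i + 1) % k))) :
    ∀ n : ℕ, ∀ i < k, Relation.ReflTransGen F (c i) (c ((i + n) % k)) := by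
  intro n
  induction n with
  | zero => intro i hi; simp [Nat.mod_eq_of_lt hi]; exact Relation.ReflTransGen.refl
  | succ n ih =>
    intro i hi
    have h1 := ih i hi
    have h2 := h ((i + n) % k) (Nat.mod_lt _ hk)
    rw [Nat.mod_add_mod] at h2
    exact h1.trans h2

private lemma cycle_bwd {V : Type*} {F : V → V → Prop} {k : ℕ} {c : ℕ → V}
    (hk : 1 ≤ k) (h : ∀ i < k, Relation.ReflTransGen F (c ((i + 1) % k)) (c i)) :
    ∀ n : ℕ, ∀ i < k, Relation.ReflTransGen F (c ((i + n) % k)) (c i) := by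
  intro n
  induction n with
  | zero => intro i hi; simp [Nat.mod_eq_of_lt hi]; exact Relation.ReflTransGen.refl
  | succ n ih =>
    intro i hi
    have h2 := h ((i + n) % k) (Nat.mod_lt _ hk)
    rw [Nat.mod_add_mod] at h2
    exact h2.trans (ih i hi)

private lemma cycle_all {V : Type*} {F : V → V → Prop} {k : ℕ} {c : ℕ → V}
    (hk : 1 ≤ k) (h : ∀ i < k, Relation.ReflTransGen F (c i) (c ((i + 1) % k))) :
    ∀ i < k, ∀ j < k, Relation.ReflTransGen F (c i) (c j) := by
  intro i hi j hj
  have := cycle_fwd hk h ((k - i) + j) i hi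
  have he : (i + ((k - i) + j)) % k = j := by
    have : i + ((k - i) + j) = k + j := by omega
    rw [this, Nat.add_mod_left, Nat.mod_eq_of_lt hj]
  rwa [he] at this

/-- reversing a directed cycle preserves the SCC equivalence relation. -/
theorem reverseCycle_sccEq {V : Type*} (E : V → V → Prop) (k : ℕ) (c : ℕ → V)
    (hc : IsDirectedCycle E k c) :
    ∀ u v, SCCEq E u v ↔ SCCEq (ReverseCycle E k c) u v := by
  obtain ⟨hk, _hinj, hcyc⟩ := hc
  set E' := ReverseCycle E k c with hE'
  -- E' one-step backward edges along the cycle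
  have hback : ∀ i < k, Relation.ReflTransGen E' (c ((i + 1) % k)) (c i) := by
    intro i hi
    exact Relation.ReflTransGen.single (Or.inr ⟨i, hi, rfl, rfl⟩)
  -- In E', each cycle vertex reaches its successor (going around backwards)
  have hfwd' : ∀ i < k, Relation.ReflTransGen E' (c i) (c ((i + 1) % k)) := by
    intro i hi
    have := cycle_bwd hk hback (k - 1) ((i + 1) % k) (Nat.mod_lt _ hk)
    have he : ((i + 1) % k + (k - 1)) % k = i := by
      rw [Nat.mod_add_mod]
      have : i + 1 + (k - 1) = i + k := by omega
      rw [this, Nat.add_mod_right, Nat.mod_eq_of_lt hi]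
    rwa [he] at this
  -- cycle vertices mutually reachable in E
  have hallE : ∀ i < k, ∀ j < k, Relation.ReflTransGen E (c i) (c j) :=
    cycle_all hk (fun i hi => Relation.ReflTransGen.single (hcyc i hi))
  -- E edges are reachable in E'
  have hEtoE' : ∀ u v, E u v → Relation.ReflTransGen E' u v := by
    intro u v huv
    by_cases hcy : ∃ i < k, u = c i ∧ v = c ((i + 1) % k)
    · obtain ⟨i, hi, hu, hv⟩ := hcy
      subst hu; subst hv
      exact hfwd' i hi
    · exact Relation.ReflTransGen.single (Or.inl ⟨huv, hcy⟩)
  -- E' edges are reachable in E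
  have hE'toE : ∀ u v, E' u v → Relation.ReflTransGen E u v := by
    intro u v huv
    rcases huv with ⟨huv, -⟩ | ⟨i, hi, hu, hv⟩
    · exact Relation.ReflTransGen.single huv
    · subst hu; subst hv
      exact hallE ((i + 1) % k) (Nat.mod_lt _ hk) i hi
  intro u v
  constructor
  · rintro ⟨h1, h2⟩
    exact ⟨rtg_of_pointwise hEtoE' h1, rtg_of_pointwise hEtoE' h2⟩
  · rintro ⟨h1, h2⟩
    exact ⟨rtg_of_pointwise hE'toE h1, rtg_of_pointwise hE'toE h2⟩
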